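/- arXiv:2211.16462 — 4 statements merged into one kernel-verified Lean document; each statement's English description precedes it below -/
import Mathlib

section
/- Let $S_1,\ldots,S_{n+1}$ be real-valued random variables on a probability space whose joint law is exchangeable, and suppose that almost surely the values $S_1,\ldots,S_{n+1}$ are pairwise distinct. Define the rank of $S_{n+1}$ as $R = \#\{ j \in \{1,\ldots,n+1\} : S_j \leq S_{n+1} \}$. Then $R$ is uniformly distributed on $\{1,2,\ldots,n+1\}$: for every $i \in \{1,\ldots,n+1\}$, $P(R = i) = \frac{1}{n+1}$. -/
open MeasureTheory Finset
open scoped ENNReal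

namespace RankAux

variable {n : ℕ}

noncomputable def rank (v : Fin (n+1) → ℝ) (k : Fin (n+1)) : ℕ :=
  (Finset.univ.filter (fun j => v j ≤ v k)).card

lemma rank_lt_rank {v : Fin (n+1) → ℝ} {k k' : Fin (n+1)}
    (h : v k < v k') : rank v k < rank v k' := by
  apply Finset.card_lt_card
  constructor
  · intro j hj
    simp only [mem_filter, mem_univ, true_and] at *
    exact hj.trans h.le
  · intro hsub
    have hk' : k' ∈ Finset.univ.filter (fun j => v j ≤ v k') := by simp
    have := hsub hk'
    simp only [mem_filter, mem_univ, true_and] at this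
    exact absurd this (not_le.mpr h)

lemma rank_injective {v : Fin (n+1) → ℝ}
    (hv : ∀ a b : Fin (n+1), a ≠ b → v a ≠ v b) : Function.Injective (rank v) := by
  intro k k' h
  by_contra hne
  rcases lt_trichotomy (v k) (v k') with hlt | heq | hgt
  · exact absurd h (rank_lt_rank hlt).ne
  · exact hv k k' hne heq
  · exact absurd h.symm (rank_lt_rank hgt).ne

lemma rank_mem_Icc (v : Fin (n+1) → ℝ) (k : Fin (n+1)) :
    rank v k ∈ Finset.Icc 1 (n+1) := by
  rw [Finset.mem_Icc]
  constructor
  · exact Finset.card_pos.mpr ⟨k, by simp⟩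
  · calc (Finset.univ.filter (fun j => v j ≤ v k)).card
        ≤ (Finset.univ : Finset (Fin (n+1))).card := Finset.card_filter_le _ _
      _ = n + 1 := by simp

lemma exists_rank_eq {v : Fin (n+1) → ℝ}
    (hv : ∀ a b : Fin (n+1), a ≠ b → v a ≠ v b) {i : ℕ} (h1 : 1 ≤ i) (h2 : i ≤ n+1) :
    ∃ k, rank v k = i := by
  have himg : Finset.image (rank v) Finset.univ = Finset.Icc 1 (n+1) := by
    apply Finset.eq_of_subset_of_card_le
    · intro x hx
      simp only [Finset.mem_image, Finset.mem_univ, true_and] at hx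
      obtain ⟨k, rfl⟩ := hx
      exact rank_mem_Icc v k
    · rw [Nat.card_Icc, Finset.card_image_of_injective _ (rank_injective hv),
        Finset.card_univ, Fintype.card_fin]
      omega
  have : i ∈ Finset.image (rank v) Finset.univ :=
    himg ▸ Finset.mem_Icc.mpr ⟨h1, h2⟩
  simpa using this

lemma card_filter_perm (σ : Equiv.Perm (Fin (n+1))) (p : Fin (n+1) → Prop) [DecidablePred p] :
    (Finset.univ.filter (fun j => p (σ j))).card = (Finset.univ.filter p).card := by
  apply Finset.card_bij (fun j _ => σ j)
  · intro a ha; simp only [mem_filter, mem_univ, true_and] at ha ⊢; exact ha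
  · intro a _ b _ h; exact σ.injective h
  · intro b hb
    refine ⟨σ.symm b, ?_, by simp⟩
    simp only [mem_filter, mem_univ, true_and, Equiv.apply_symm_apply] at hb ⊢
    exact hb

lemma rank_comp (σ : Equiv.Perm (Fin (n+1))) (v : Fin (n+1) → ℝ) (k : Fin (n+1)) :
    rank (fun j => v (σ j)) k = rank v (σ k) := by
  unfold rank
  exact card_filter_perm σ (fun j => v j ≤ v (σ k))

end RankAux

/-- For an exchangeable sequence `S 0, …, S n` (that is, `n+1` real random
variables whose joint law is invariant under every permutation of the indices) that is
almost surely pairwise distinct, the rank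
`R = #{ j : S j ≤ S (last) }` of the last variable is uniform on `{1, …, n+1}`. -/
theorem rank_uniform_of_exchangeable
    {Ω : Type*} [MeasurableSpace Ω] (P : Measure Ω) [IsProbabilityMeasure P]
    (n : ℕ) (S : Fin (n + 1) → Ω → ℝ) (hmeas : ∀ i, Measurable (S i))
    (hexch : ∀ σ : Equiv.Perm (Fin (n + 1)),
      Measure.map (fun ω => fun i => S (σ i) ω) P = Measure.map (fun ω => fun i => S i ω) P)
    (hdist : ∀ᵐ ω ∂P, ∀ i j : Fin (n + 1), i ≠ j → S i ω ≠ S j ω) :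
    ∀ i : ℕ, 1 ≤ i → i ≤ n + 1 →
      P {ω | (Finset.univ.filter
          (fun j : Fin (n + 1) => S j ω ≤ S (Fin.last n) ω)).card = i}
        = 1 / (n + 1 : ℝ≥0∞) := by
  intro i h1 h2
  classical
  set A : Fin (n+1) → Set Ω :=
    fun k => {ω | RankAux.rank (fun j => S j ω) k = i} with hA
  -- measurability of rank functions
  have hRmeas : ∀ k : Fin (n+1), Measurable (fun ω => RankAux.rank (fun j => S j ω) k) := by
    intro k
    have heq : (fun ω => RankAux.rank (fun j => S j ω) k)
        = fun ω => ∑ j : Fin (n+1), if S j ω ≤ S k ω then 1 else 0 := by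
      funext ω
      rw [RankAux.rank, Finset.card_filter]
    rw [heq]
    exact Finset.measurable_sum _ fun j _ =>
      Measurable.ite (measurableSet_le (hmeas j) (hmeas k)) measurable_const measurable_const
  have hAmeas : ∀ k, MeasurableSet (A k) := fun k =>
    (hRmeas k) (measurableSet_singleton i)
  -- the good set
  set G : Set Ω := {ω | ∀ a b : Fin (n+1), a ≠ b → S a ω ≠ S b ω} with hGdef
  have hGmeas : MeasurableSet G := by
    have : G = ⋂ (a : Fin (n+1)) (b : Fin (n+1)),
        {ω | a ≠ b → S a ω ≠ S b ω} := by
      ext ω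
      constructor
      · intro h
        exact Set.mem_iInter.mpr fun a => Set.mem_iInter.mpr fun b => h a b
      · intro h a b
        exact Set.mem_iInter.mp (Set.mem_iInter.mp h a) b
    rw [this]
    refine MeasurableSet.iInter fun a => MeasurableSet.iInter fun b => ?_
    by_cases hab : a = b
    · simp [hab]
    · have : {ω | a ≠ b → S a ω ≠ S b ω} = {ω | S a ω = S b ω}ᶜ := by
        ext ω; simp [hab]
      rw [this]
      exact (measurableSet_eq_fun (hmeas a) (hmeas b)).compl
  have h0 : P Gᶜ = 0 := ae_iff.mp hdist
  have hGone : P G = 1 := by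
    have := measure_add_measure_compl (μ := P) hGmeas
    rwa [h0, add_zero, measure_univ] at this
  -- exchangeability: P (A k) = P (A (Fin.last n))
  have hTmeas : Measurable (fun ω => fun j : Fin (n+1) => S j ω) :=
    measurable_pi_lambda _ hmeas
  have hBmeas : MeasurableSet {x : Fin (n+1) → ℝ | RankAux.rank x (Fin.last n) = i} := by
    have hrm : Measurable (fun x : Fin (n+1) → ℝ => RankAux.rank x (Fin.last n)) := by
      have heq : (fun x : Fin (n+1) → ℝ => RankAux.rank x (Fin.last n))
          = fun x => ∑ j : Fin (n+1), if x j ≤ x (Fin.last n) then 1 else 0 := by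
        funext x
        rw [RankAux.rank, Finset.card_filter]
      rw [heq]
      exact Finset.measurable_sum _ fun j _ =>
        Measurable.ite (measurableSet_le (measurable_pi_apply j) (measurable_pi_apply _))
          measurable_const measurable_const
    exact hrm (measurableSet_singleton i)
  have hPeq : ∀ k : Fin (n+1), P (A k) = P (A (Fin.last n)) := by
    intro k
    let σ : Equiv.Perm (Fin (n+1)) := Equiv.swap k (Fin.last n)
    have hTσ : Measurable (fun ω => fun j : Fin (n+1) => S (σ j) ω) :=
      measurable_pi_lambda _ fun j => hmeas (σ j)
    have key := hexch σ
    have h1' : P (A (Fin.last n))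
        = Measure.map (fun ω => fun j : Fin (n+1) => S j ω) P
            {x | RankAux.rank x (Fin.last n) = i} := by
      rw [Measure.map_apply hTmeas hBmeas]
      rfl
    have h2' : Measure.map (fun ω => fun j : Fin (n+1) => S (σ j) ω) P
            {x | RankAux.rank x (Fin.last n) = i} = P (A k) := by
      rw [Measure.map_apply hTσ hBmeas]
      congr 1
      ext ω
      show RankAux.rank (fun j => S (σ j) ω) (Fin.last n) = i
        ↔ RankAux.rank (fun j => S j ω) k = i
      rw [RankAux.rank_comp σ (fun j => S j ω) (Fin.last n),
        show σ (Fin.last n) = k from Equiv.swap_apply_right _ _]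
    rw [h1', ← key, h2']
  -- disjointness
  have hdisj : Pairwise (Function.onFun Disjoint fun k => A k ∩ G) := by
    intro k k' hkk'
    rw [Function.onFun, Set.disjoint_left]
    rintro ω ⟨hk, hG⟩ ⟨hk', _⟩
    exact hkk' (RankAux.rank_injective hG (hk.trans hk'.symm))
  -- union is G
  have hunion : (⋃ k, A k ∩ G) = G := by
    ext ω
    constructor
    · rintro ⟨_, ⟨k, rfl⟩, _, hωG⟩
      exact hωG
    · intro hωG
      obtain ⟨k, hk⟩ := RankAux.exists_rank_eq hωG h1 h2
      exact Set.mem_iUnion.mpr ⟨k, hk, hωG⟩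
  have hsum : ∑ k : Fin (n+1), P (A k ∩ G) = 1 := by
    rw [← tsum_fintype (L := SummationFilter.unconditional _), ← measure_iUnion hdisj fun k => (hAmeas k).inter hGmeas,
      hunion, hGone]
  have hAG : ∀ k, P (A k ∩ G) = P (A k) := fun k => measure_inter_conull h0
  have hmul : ((n : ℝ≥0∞) + 1) * P (A (Fin.last n)) = 1 := by
    have : ∑ k : Fin (n+1), P (A (Fin.last n)) = 1 := by
      rw [← hsum]
      exact Finset.sum_congr rfl fun k _ => ((hAG k).trans (hPeq k)).symm
    rw [Finset.sum_const, Finset.card_univ, Fintype.card_fin, nsmul_eq_mul] at this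
    convert this using 2
    push_cast
    ring
  have hgoal : {ω | (Finset.univ.filter
      (fun j : Fin (n + 1) => S j ω ≤ S (Fin.last n) ω)).card = i} = A (Fin.last n) := rfl
  rw [hgoal]
  have hne : (n : ℝ≥0∞) + 1 ≠ 0 := by
    intro h
    exact one_ne_zero (add_eq_zero.mp h).2
  rw [ENNReal.eq_div_iff hne (by simp)]
  exact hmul
end

section
/- Let $S_1,\ldots,S_{n+1}$ be real-valued random variables on a probability space whose joint law is exchangeable, and suppose that almost surely the values $S_1,\ldots,S_{n+1}$ are pairwise distinct. For $1 \leq i \leq n$, let $S_{(i)}$ denote the $i$-th smallest value among the first $n$ variables $S_1,\ldots,S_n$. Then for every $i \in \{1,\ldots,n\}$, $P(S_{n+1} \leq S_{(i)}) = \frac{i}{n+1}$. -/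
open MeasureTheory
open scoped ENNReal

noncomputable def orderStat (n : ℕ) (v : Fin n → ℝ) (i : ℕ) : ℝ :=
  sInf {x : ℝ | i ≤ (Finset.univ.filter (fun j : Fin n => v j ≤ x)).card}

lemma lemA {n : ℕ} (v : Fin (n + 1) → ℝ) (hv : Function.Injective v)
    (i : ℕ) (h1 : 1 ≤ i) (h2 : i ≤ n) :
    (v (Fin.last n) ≤ orderStat n (fun j : Fin n => v j.castSucc) i ↔
      (Finset.univ.filter fun k : Fin (n + 1) => v k ≤ v (Fin.last n)).card ≤ i) := by
  classical
  set w : Fin n → ℝ := fun j => v j.castSucc with hw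
  set t : ℝ := v (Fin.last n) with htt
  have hn : 0 < n := h1.trans h2
  have htne : ∀ j : Fin n, w j ≠ t := by
    intro j h
    exact absurd (hv h) (Fin.ne_of_lt (Fin.castSucc_lt_last j))
  set N : ℝ → ℕ := fun x => (Finset.univ.filter fun j : Fin n => w j ≤ x).card with hN
  have hNmono : ∀ {x y : ℝ}, x ≤ y → N x ≤ N y := by
    intro x y hxy
    refine Finset.card_le_card (fun j hj => ?_)
    simp only [Finset.mem_filter, Finset.mem_univ, true_and] at *
    exact hj.trans hxy
  have hcards : (Finset.univ.filter fun k : Fin (n + 1) => v k ≤ t).card = N t + 1 := by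
    simp only [hN]
    rw [Finset.card_filter, Finset.card_filter, Fin.sum_univ_castSucc]
    simp [w]
    exact htt.symm.le
  haveI : Nonempty (Fin n) := Fin.pos_iff_nonempty.mp hn
  have himg : (Finset.univ.image w).Nonempty := by simp [Finset.univ_nonempty]
  set A : Set ℝ := {x : ℝ | i ≤ N x} with hA
  have hAne : A.Nonempty := by
    refine ⟨(Finset.univ.image w).max' himg, ?_⟩
    have : (Finset.univ.filter fun j : Fin n => w j ≤ (Finset.univ.image w).max' himg) =
        Finset.univ := by
      ext j
      simp only [Finset.mem_filter, Finset.mem_univ, true_and, iff_true]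
      exact Finset.le_max' _ _ (Finset.mem_image_of_mem w (Finset.mem_univ j))
    simp only [hA, Set.mem_setOf_eq, N, this, Finset.card_univ, Fintype.card_fin]
    exact h2
  have hAbdd : BddBelow A := by
    refine ⟨(Finset.univ.image w).min' himg, fun x hx => ?_⟩
    have hxN : 1 ≤ N x := h1.trans hx
    have : (Finset.univ.filter fun j : Fin n => w j ≤ x).Nonempty :=
      Finset.card_pos.mp hxN
    obtain ⟨j, hj⟩ := this
    simp only [Finset.mem_filter] at hj
    exact le_trans (Finset.min'_le _ _ (Finset.mem_image_of_mem w (Finset.mem_univ j))) hj.2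
  have horder : orderStat n w i = sInf A := rfl
  constructor
  · intro hle
    rw [hcards]
    by_contra hcon
    push_neg at hcon
    have hiNt : i ≤ N t := by omega
    -- the filter set is nonempty
    have hFne : (Finset.univ.filter fun j : Fin n => w j ≤ t).Nonempty :=
      Finset.card_pos.mp (h1.trans hiNt)
    have himgF : ((Finset.univ.filter fun j : Fin n => w j ≤ t).image w).Nonempty :=
      hFne.image w
    set x : ℝ := ((Finset.univ.filter fun j : Fin n => w j ≤ t).image w).max' himgF with hx
    have hxlt : x < t := by
      obtain ⟨j, hj, hjx⟩ := Finset.mem_image.mp (Finset.max'_mem _ himgF)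
      simp only [Finset.mem_filter] at hj
      rw [hx, ← hjx]
      exact lt_of_le_of_ne hj.2 (htne j)
    have hxA : x ∈ A := by
      have hsub : (Finset.univ.filter fun j : Fin n => w j ≤ t) ⊆
          (Finset.univ.filter fun j : Fin n => w j ≤ x) := by
        intro j hj
        simp only [Finset.mem_filter, Finset.mem_univ, true_and] at *
        exact Finset.le_max' _ _ (Finset.mem_image.mpr ⟨j, by simp [Finset.mem_filter, hj], rfl⟩)
      exact le_trans hiNt (Finset.card_le_card hsub)
    have := csInf_le hAbdd hxA
    rw [horder] at hle
    linarith
  · intro hcard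
    rw [hcards] at hcard
    have hNt : N t < i := by omega
    rw [horder]
    refine le_csInf hAne (fun x hx => ?_)
    by_contra hxt
    push_neg at hxt
    have : N x ≤ N t := hNmono hxt.le
    have : i ≤ N t := le_trans hx this
    omega

lemma lemB {n : ℕ} (v : Fin (n + 1) → ℝ) (hv : Function.Injective v)
    (i : ℕ) (h2 : i ≤ n + 1) :
    (Finset.univ.filter fun j : Fin (n + 1) =>
      (Finset.univ.filter fun k : Fin (n + 1) => v k ≤ v j).card ≤ i).card = i := by
  classical
  set r : Fin (n + 1) → ℕ := fun j => (Finset.univ.filter fun k => v k ≤ v j).card with hr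
  have hstrict : ∀ {a b : Fin (n + 1)}, v a < v b → r a < r b := by
    intro a b hab
    refine Finset.card_lt_card ⟨fun k hk => ?_, fun hsub => ?_⟩
    · simp only [Finset.mem_filter, Finset.mem_univ, true_and] at *
      exact hk.trans hab.le
    · have hb : b ∈ Finset.univ.filter fun k => v k ≤ v b := by
        simp [Finset.mem_filter]
      have := hsub hb
      simp only [Finset.mem_filter, Finset.mem_univ, true_and] at this
      exact absurd this (not_le.mpr hab)
  have hrinj : Function.Injective r := by
    intro a b h
    rcases lt_trichotomy (v a) (v b) with hlt | heq | hgt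
    · exact absurd h (Nat.ne_of_lt (hstrict hlt))
    · exact hv heq
    · exact absurd h.symm (Nat.ne_of_lt (hstrict hgt))
  have himage : Finset.univ.image r = Finset.Icc 1 (n + 1) := by
    refine Finset.eq_of_subset_of_card_le (fun m hm => ?_) ?_
    · obtain ⟨j, _, rfl⟩ := Finset.mem_image.mp hm
      simp only [Finset.mem_Icc]
      constructor
      · refine Finset.card_pos.mpr ⟨j, ?_⟩
        simp [Finset.mem_filter]
      · simpa using Finset.card_le_card
          (Finset.filter_subset (fun k => v k ≤ v j) Finset.univ)
    · rw [Finset.card_image_of_injective _ hrinj]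
      simp
  calc (Finset.univ.filter fun j : Fin (n + 1) => r j ≤ i).card
      = ((Finset.univ.image r).filter fun m => m ≤ i).card := by
        rw [Finset.filter_image, Finset.card_image_of_injective _ hrinj]
    _ = ((Finset.Icc 1 (n + 1)).filter fun m => m ≤ i).card := by rw [himage]
    _ = (Finset.Icc 1 i).card := by
        congr 1
        ext a
        simp only [Finset.mem_filter, Finset.mem_Icc]
        omega
    _ = i := by simp

/-- For exchangeable, almost surely pairwise distinct real random variables
`S 0, …, S n`, and `S_(i)` the `i`-th smallest among the first `n` of them, we have
`P(S (last) ≤ S_(i)) = i / (n+1)` for every `i ∈ {1, …, n}`. -/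
theorem prob_le_orderStat_of_exchangeable
    {Ω : Type*} [MeasurableSpace Ω] (P : Measure Ω) [IsProbabilityMeasure P]
    (n : ℕ) (S : Fin (n + 1) → Ω → ℝ) (hmeas : ∀ i, Measurable (S i))
    (hexch : ∀ σ : Equiv.Perm (Fin (n + 1)),
      Measure.map (fun ω => fun i => S (σ i) ω) P = Measure.map (fun ω => fun i => S i ω) P)
    (hdist : ∀ᵐ ω ∂P, ∀ i j : Fin (n + 1), i ≠ j → S i ω ≠ S j ω) :
    ∀ i : ℕ, 1 ≤ i → i ≤ n →
      P {ω | S (Fin.last n) ω ≤ orderStat n (fun j : Fin n => S j.castSucc ω) i}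
        = (i : ℝ≥0∞) / (n + 1 : ℝ≥0∞) := by
  classical
  intro i h1 h2
  set A : Fin (n + 1) → Set Ω := fun j =>
    {ω | (Finset.univ.filter fun k : Fin (n + 1) => S k ω ≤ S j ω).card ≤ i} with hAdef
  have hAmeas : ∀ j, MeasurableSet (A j) := by
    intro j
    have hF : Measurable fun ω => (Finset.univ.filter fun k : Fin (n + 1) => S k ω ≤ S j ω).card := by
      simp only [Finset.card_filter]
      exact Finset.measurable_sum _ (fun k _ =>
        Measurable.ite (measurableSet_le (hmeas k) (hmeas j)) measurable_const measurable_const)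
    exact hF (MeasurableSet.of_discrete (s := Set.Iic i))
  -- the measurable target set in the product space
  set B : Set (Fin (n + 1) → ℝ) :=
    {v | (Finset.univ.filter fun k : Fin (n + 1) => v k ≤ v (Fin.last n)).card ≤ i} with hBdef
  have hBmeas : MeasurableSet B := by
    have hF : Measurable fun v : Fin (n + 1) → ℝ =>
        (Finset.univ.filter fun k : Fin (n + 1) => v k ≤ v (Fin.last n)).card := by
      simp only [Finset.card_filter]
      exact Finset.measurable_sum _ (fun k _ =>
        Measurable.ite (measurableSet_le (measurable_pi_apply k) (measurable_pi_apply _))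
          measurable_const measurable_const)
    exact hF (MeasurableSet.of_discrete (s := Set.Iic i))
  have hswap : ∀ j, P (A j) = P (A (Fin.last n)) := by
    intro j
    set σ := Equiv.swap j (Fin.last n) with hσ
    have hm1 : Measurable fun ω => fun k => S (σ k) ω :=
      measurable_pi_lambda _ (fun k => hmeas _)
    have hm2 : Measurable fun ω => fun k => S k ω :=
      measurable_pi_lambda _ (fun k => hmeas _)
    have key := congrArg (fun μ : Measure (Fin (n + 1) → ℝ) => μ B) (hexch σ)
    simp only [Measure.map_apply hm1 hBmeas, Measure.map_apply hm2 hBmeas] at key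
    have hpre2 : (fun ω => fun k => S k ω) ⁻¹' B = A (Fin.last n) := rfl
    have hpre1 : (fun ω => fun k => S (σ k) ω) ⁻¹' B = A j := by
      ext ω
      simp only [Set.mem_preimage, hBdef, Set.mem_setOf_eq, hAdef]
      have hlast : σ (Fin.last n) = j := Equiv.swap_apply_right _ _
      simp only [hlast]
      have hc : (Finset.univ.filter fun k : Fin (n + 1) => S (σ k) ω ≤ S j ω).card
          = (Finset.univ.filter fun k : Fin (n + 1) => S k ω ≤ S j ω).card := by
        rw [Finset.card_filter, Finset.card_filter]
        exact Equiv.sum_comp σ (fun k => if S k ω ≤ S j ω then 1 else 0)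
      rw [hc]
    rw [hpre1, hpre2] at key
    exact key
  have hsum : ∑ j : Fin (n + 1), P (A j) = (i : ℝ≥0∞) := by
    have h1' : ∀ j : Fin (n + 1), P (A j)
        = ∫⁻ ω, (A j).indicator (fun _ => (1 : ℝ≥0∞)) ω ∂P :=
      fun j => (lintegral_indicator_one (hAmeas j)).symm
    have hae : ∀ᵐ ω ∂P,
        (∑ j : Fin (n + 1), (A j).indicator (fun _ => (1 : ℝ≥0∞)) ω) = (i : ℝ≥0∞) := by
      filter_upwards [hdist] with ω hω
      have hvinj : Function.Injective fun k : Fin (n + 1) => S k ω := by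
        intro a b hab
        by_contra hne
        exact hω a b hne hab
      have hB := lemB (fun k => S k ω) hvinj i (by omega)
      calc ∑ j : Fin (n + 1), (A j).indicator (fun _ => (1 : ℝ≥0∞)) ω
          = ∑ j : Fin (n + 1), if ω ∈ A j then (1 : ℝ≥0∞) else 0 := by
            simp [Set.indicator_apply]
        _ = ((Finset.univ.filter fun j : Fin (n + 1) => ω ∈ A j).card : ℝ≥0∞) := by
            rw [Finset.sum_boole]
        _ = (i : ℝ≥0∞) := by
            have hfe : (Finset.univ.filter fun j : Fin (n + 1) => ω ∈ A j)
                = (Finset.univ.filter fun j : Fin (n + 1) =>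
                    (Finset.univ.filter fun k : Fin (n + 1) => S k ω ≤ S j ω).card ≤ i) := by
              apply Finset.filter_congr
              intro j _
              simp [hAdef]
            rw [hfe, hB]
    calc ∑ j : Fin (n + 1), P (A j)
        = ∑ j : Fin (n + 1), ∫⁻ ω, (A j).indicator (fun _ => (1 : ℝ≥0∞)) ω ∂P :=
          Finset.sum_congr rfl (fun j _ => h1' j)
      _ = ∫⁻ ω, ∑ j : Fin (n + 1), (A j).indicator (fun _ => (1 : ℝ≥0∞)) ω ∂P :=
          (lintegral_finset_sum _ (fun j _ => measurable_one.indicator (hAmeas j))).symm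
      _ = ∫⁻ _, (i : ℝ≥0∞) ∂P := lintegral_congr_ae hae
      _ = (i : ℝ≥0∞) := by simp
  have hsum2 : ∑ j : Fin (n + 1), P (A j) = ((n : ℝ≥0∞) + 1) * P (A (Fin.last n)) := by
    rw [Finset.sum_congr rfl (fun j _ => hswap j), Finset.sum_const, Finset.card_univ,
      Fintype.card_fin, nsmul_eq_mul]
    norm_cast
  have hPA : P (A (Fin.last n)) = (i : ℝ≥0∞) / ((n : ℝ≥0∞) + 1) := by
    rw [ENNReal.eq_div_iff]
    · rw [← hsum2, hsum]
    · exact (lt_of_lt_of_le one_pos le_add_self).ne'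
    · have : ((n : ℝ≥0∞) + 1) = ((n + 1 : ℕ) : ℝ≥0∞) := by push_cast; ring
      rw [this]
      exact ENNReal.natCast_ne_top _
  have haeq : {ω | S (Fin.last n) ω ≤ orderStat n (fun j : Fin n => S j.castSucc ω) i}
      =ᵐ[P] A (Fin.last n) := by
    rw [Filter.eventuallyEq_set]
    filter_upwards [hdist] with ω hω
    have hvinj : Function.Injective fun k : Fin (n + 1) => S k ω := by
      intro a b hab
      by_contra hne
      exact hω a b hne hab
    exact lemA (fun k => S k ω) hvinj i h1 h2
  rw [measure_congr haeq, hPA]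
end

section
/- In the setting of PCQR (exchangeable $(X_1,Y_1),\ldots,(X_{n+1},Y_{n+1})$ in $\mathcal{X} \times \mathbb{R}$; for each $x$, $\hat{Q}_x:(0,1)\to\mathbb{R}$ continuous strictly increasing with inverse $\hat{F}_x$; conformity scores $S_i = |\tfrac{1}{2} - \hat{F}_{X_i}(Y_i)|$ almost surely pairwise distinct; $S_{(i)}$ the $i$-th smallest of $S_1,\ldots,S_n$; $\mathrm{PCQR}(x,s) = [\hat{Q}_x(\tfrac{1}{2}-s), \hat{Q}_x(\tfrac{1}{2}+s)]$), for every $\delta$ with $\frac{1}{n+1} \leq \delta < 1$, the coverage probabilities of the two PCQR intervals differ by at most $\frac{1}{n+1}$: $P\left(Y_{n+1} \in \mathrm{PCQR}(X_{n+1}, S_{(\lceil (1-\delta)(n+1) \rceil)})\right) - P\left(Y_{n+1} \in \mathrm{PCQR}(X_{n+1}, S_{(\lfloor (1-\delta)(n+1) \rfloor)})\right) \leq \frac{1}{n+1}$. -/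
open MeasureTheory
open scoped ENNReal

namespace PCQRAux

lemma orderStat_zero (n : ℕ) (v : Fin n → ℝ) : orderStat n v 0 = 0 := by
  have h : {x : ℝ | 0 ≤ (Finset.univ.filter (fun j : Fin n => v j ≤ x)).card} = Set.univ := by
    ext x; simp
  rw [orderStat, h]
  have : ¬ BddBelow (Set.univ : Set ℝ) := by
    simp [BddBelow, Set.Nonempty, lowerBounds]
    intro x; exact ⟨x - 1, by linarith⟩
  exact Real.sInf_of_not_bddBelow this

variable {n : ℕ} (v : Fin n → ℝ) {i : ℕ}

private def T (n : ℕ) (v : Fin n → ℝ) (i : ℕ) : Set ℝ :=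
  {x : ℝ | i ≤ (Finset.univ.filter (fun j : Fin n => v j ≤ x)).card}

lemma T_nonempty (hn : 0 < n) (hin : i ≤ n) : (T n v i).Nonempty := by
  have hne : (Finset.univ.image v).Nonempty := by
    simpa using Finset.univ_nonempty_iff.2 (Fin.pos_iff_nonempty.1 hn)
  refine ⟨(Finset.univ.image v).max' hne, ?_⟩
  have : Finset.univ.filter (fun j : Fin n => v j ≤ (Finset.univ.image v).max' hne) = Finset.univ := by
    refine Finset.filter_true_of_mem (fun j _ => ?_)
    exact Finset.le_max' _ _ (Finset.mem_image_of_mem v (Finset.mem_univ j))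
  simp only [T, Set.mem_setOf_eq, this, Finset.card_univ, Fintype.card_fin]
  exact hin

lemma T_bddBelow (hn : 0 < n) (hi : 1 ≤ i) : BddBelow (T n v i) := by
  have hne : (Finset.univ.image v).Nonempty := by
    simpa using Finset.univ_nonempty_iff.2 (Fin.pos_iff_nonempty.1 hn)
  refine ⟨(Finset.univ.image v).min' hne, fun x hx => ?_⟩
  have hcard : 1 ≤ (Finset.univ.filter (fun j : Fin n => v j ≤ x)).card := le_trans hi hx
  obtain ⟨j, hj⟩ := Finset.card_pos.1 hcard
  have hvj : v j ≤ x := (Finset.mem_filter.1 hj).2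
  exact le_trans (Finset.min'_le _ _ (Finset.mem_image_of_mem v (Finset.mem_univ j))) hvj

lemma orderStat_mem_T (hn : 0 < n) (hi : 1 ≤ i) (hin : i ≤ n) :
    orderStat n v i ∈ T n v i := by
  set m := orderStat n v i with hm
  by_contra hmem
  simp only [T, Set.mem_setOf_eq, not_le] at hmem
  have hU : (Finset.univ.filter (fun j : Fin n => m < v j)).Nonempty := by
    by_contra hU
    rw [Finset.not_nonempty_iff_eq_empty, Finset.filter_eq_empty_iff] at hU
    have : Finset.univ.filter (fun j : Fin n => v j ≤ m) = Finset.univ :=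
      Finset.filter_true_of_mem (fun j _ => not_lt.1 (hU (Finset.mem_univ j)))
    rw [this] at hmem
    simp only [Finset.card_univ, Fintype.card_fin] at hmem
    omega
  have hUim : ((Finset.univ.filter (fun j : Fin n => m < v j)).image v).Nonempty :=
    hU.image v
  set w := ((Finset.univ.filter (fun j : Fin n => m < v j)).image v).min' hUim with hw
  have hmw : m < w := by
    obtain ⟨j, hj, hvj⟩ := Finset.mem_image.1 (Finset.min'_mem _ hUim)
    rw [hw, ← hvj]; exact (Finset.mem_filter.1 hj).2
  have hlow : ∀ x ∈ T n v i, w ≤ x := by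
    intro x hx
    by_contra hxw
    push_neg at hxw
    have hxm : m ≤ x := csInf_le (T_bddBelow v hn hi) hx
    have : Finset.univ.filter (fun j : Fin n => v j ≤ x)
        = Finset.univ.filter (fun j : Fin n => v j ≤ m) := by
      refine Finset.filter_congr (fun j _ => ?_)
      constructor
      · intro h
        by_contra hjm
        push_neg at hjm
        have : w ≤ v j := Finset.min'_le _ _
          (Finset.mem_image_of_mem v (Finset.mem_filter.2 ⟨Finset.mem_univ j, hjm⟩))
        linarith
      · intro h; linarith
    rw [T, Set.mem_setOf_eq, this] at hx
    omega
  have : w ≤ m := le_csInf (T_nonempty v hn hin) hlow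
  linarith

lemma orderStat_attained (hn : 0 < n) (hi : 1 ≤ i) (hin : i ≤ n) :
    ∃ j, v j = orderStat n v i := by
  set m := orderStat n v i with hm
  have hmT := orderStat_mem_T v hn hi hin
  rw [T, Set.mem_setOf_eq] at hmT
  have hne : (Finset.univ.filter (fun j : Fin n => v j ≤ m)).Nonempty :=
    Finset.card_pos.1 (lt_of_lt_of_le hi hmT)
  have hneim := hne.image v
  set w := ((Finset.univ.filter (fun j : Fin n => v j ≤ m)).image v).max' hneim with hw
  obtain ⟨j, hj, hvj⟩ := Finset.mem_image.1 (Finset.max'_mem _ hneim)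
  have hwm : w ≤ m := by rw [hw, ← hvj]; exact (Finset.mem_filter.1 hj).2
  have hwT : w ∈ T n v i := by
    rw [T, Set.mem_setOf_eq]
    have : Finset.univ.filter (fun j : Fin n => v j ≤ m)
        ⊆ Finset.univ.filter (fun j : Fin n => v j ≤ w) := by
      intro a ha
      refine Finset.mem_filter.2 ⟨Finset.mem_univ a, ?_⟩
      exact Finset.le_max' _ _ (Finset.mem_image_of_mem v ha)
    calc i ≤ _ := hmT
    _ ≤ _ := Finset.card_le_card this
  have hmw : m ≤ w := csInf_le (T_bddBelow v hn hi) hwT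
  exact ⟨j, by rw [hvj]; linarith⟩

lemma card_lt_orderStat (hn : 0 < n) (hi : 1 ≤ i) (hin : i ≤ n) :
    (Finset.univ.filter (fun j : Fin n => v j < orderStat n v i)).card < i := by
  set m := orderStat n v i with hm
  by_contra hcard
  push_neg at hcard
  have hne : (Finset.univ.filter (fun j : Fin n => v j < m)).Nonempty :=
    Finset.card_pos.1 (lt_of_lt_of_le hi hcard)
  have hneim := hne.image v
  set w := ((Finset.univ.filter (fun j : Fin n => v j < m)).image v).max' hneim with hw
  have hwm : w < m := by
    obtain ⟨j, hj, hvj⟩ := Finset.mem_image.1 (Finset.max'_mem _ hneim)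
    rw [hw, ← hvj]; exact (Finset.mem_filter.1 hj).2
  have hwT : w ∈ T n v i := by
    rw [T, Set.mem_setOf_eq]
    have : Finset.univ.filter (fun j : Fin n => v j < m)
        ⊆ Finset.univ.filter (fun j : Fin n => v j ≤ w) := by
      intro a ha
      refine Finset.mem_filter.2 ⟨Finset.mem_univ a, ?_⟩
      exact Finset.le_max' _ _ (Finset.mem_image_of_mem v ha)
    exact le_trans hcard (Finset.card_le_card this)
  have : m ≤ w := csInf_le (T_bddBelow v hn hi) hwT
  linarith

lemma card_le_orderStat (hn : 0 < n) (hi : 1 ≤ i) (hin : i ≤ n) :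
    i ≤ (Finset.univ.filter (fun j : Fin n => v j ≤ orderStat n v i)).card :=
  orderStat_mem_T v hn hi hin

/-- rank injectivity for distinct values -/
lemma rank_ne {N : ℕ} (v : Fin N → ℝ) (hd : ∀ i j, i ≠ j → v i ≠ v j)
    {i j : Fin N} (hij : i ≠ j) :
    (Finset.univ.filter (fun m => v m < v i ∧ m ≠ i)).card ≠
    (Finset.univ.filter (fun m => v m < v j ∧ m ≠ j)).card := by
  have key : ∀ i j : Fin N, i ≠ j → v i < v j →
      (Finset.univ.filter (fun m => v m < v i ∧ m ≠ i)).card <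
      (Finset.univ.filter (fun m => v m < v j ∧ m ≠ j)).card := by
    intro i j hij hv
    apply Finset.card_lt_card
    rw [Finset.ssubset_iff_of_subset]
    · exact ⟨i, Finset.mem_filter.2 ⟨Finset.mem_univ i, hv, hij⟩,
        fun h => (Finset.mem_filter.1 h).2.2 rfl⟩
    · intro m hm
      obtain ⟨_, hml, hmi⟩ := Finset.mem_filter.1 hm
      refine Finset.mem_filter.2 ⟨Finset.mem_univ m, lt_trans hml hv, ?_⟩
      rintro rfl; exact absurd rfl (ne_of_lt (lt_trans hml hv))
  rcases lt_or_gt_of_ne (hd i j hij) with h | h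
  · exact ne_of_lt (key i j hij h)
  · exact ne_of_gt (key j i (Ne.symm hij) h)

lemma card_castSucc {n : ℕ} (w : Fin (n+1) → ℝ) (a : ℝ) :
    (Finset.univ.filter (fun j : Fin (n+1) => w j < a ∧ j ≠ Fin.last n)).card =
    (Finset.univ.filter (fun j : Fin n => w j.castSucc < a)).card := by
  refine (Finset.card_bij (fun (j : Fin n) _ => j.castSucc) ?_ ?_ ?_).symm
  · intro j hj
    refine Finset.mem_filter.2 ⟨Finset.mem_univ _, (Finset.mem_filter.1 hj).2, ?_⟩
    exact Fin.ne_of_lt (Fin.castSucc_lt_last j)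
  · intro a₁ _ a₂ _ h
    exact Fin.castSucc_injective n h
  · intro j hj
    obtain ⟨_, hja, hjl⟩ := Finset.mem_filter.1 hj
    exact ⟨j.castPred hjl, Finset.mem_filter.2 ⟨Finset.mem_univ _, by
      rwa [Fin.castSucc_castPred]⟩, j.castSucc_castPred hjl⟩

/-- deterministic core: between consecutive order statistics, the rank is exactly k -/
lemma core {n k : ℕ} (hk : k + 1 ≤ n) (w : Fin (n+1) → ℝ)
    (h1 : w (Fin.last n) ≤ orderStat n (fun j => w j.castSucc) (k+1))
    (h2 : ¬ w (Fin.last n) ≤ orderStat n (fun j => w j.castSucc) k) :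
    (Finset.univ.filter (fun j : Fin (n+1) => w j < w (Fin.last n) ∧ j ≠ Fin.last n)).card = k := by
  have hn : 0 < n := lt_of_lt_of_le (Nat.succ_pos k) hk
  rw [card_castSucc]
  set a := w (Fin.last n)
  set v : Fin n → ℝ := fun j => w j.castSucc with hv
  show (Finset.univ.filter (fun j : Fin n => v j < a)).card = k
  have hub : (Finset.univ.filter (fun j : Fin n => v j < a)).card ≤ k := by
    have hsub : Finset.univ.filter (fun j : Fin n => v j < a)
        ⊆ Finset.univ.filter (fun j : Fin n => v j < orderStat n v (k+1)) := by
      intro m hm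
      exact Finset.mem_filter.2 ⟨Finset.mem_univ m,
        lt_of_lt_of_le (Finset.mem_filter.1 hm).2 h1⟩
    have h3 : (Finset.univ.filter (fun j : Fin n => v j < orderStat n v (k+1))).card < k+1 :=
      card_lt_orderStat v hn (by omega) hk
    have h4 := Finset.card_le_card hsub
    omega
  have hlb : k ≤ (Finset.univ.filter (fun j : Fin n => v j < a)).card := by
    rcases Nat.eq_zero_or_pos k with rfl | hkpos
    · exact Nat.zero_le _
    · have hsub : Finset.univ.filter (fun j : Fin n => v j ≤ orderStat n v k)
          ⊆ Finset.univ.filter (fun j : Fin n => v j < a) := by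
        intro m hm
        push_neg at h2
        exact Finset.mem_filter.2 ⟨Finset.mem_univ m,
          lt_of_le_of_lt (Finset.mem_filter.1 hm).2 h2⟩
      exact le_trans (card_le_orderStat v hn hkpos (le_trans (Nat.le_succ k) hk))
        (Finset.card_le_card hsub)
  omega

/-- measurability of the rank counting function -/
lemma measurable_cnt {Ω : Type*} [MeasurableSpace Ω] {N : ℕ} (S : Fin N → Ω → ℝ)
    (hS : ∀ i, Measurable (S i)) (i : Fin N) :
    Measurable (fun ω => (Finset.univ.filter (fun j => S j ω < S i ω ∧ j ≠ i)).card) := by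
  classical
  have h : (fun ω => (Finset.univ.filter (fun j => S j ω < S i ω ∧ j ≠ i)).card)
      = fun ω => ∑ j : Fin N, if S j ω < S i ω ∧ j ≠ i then 1 else 0 := by
    funext ω; rw [Finset.card_filter]
  rw [h]
  refine Finset.measurable_sum _ (fun j _ => ?_)
  by_cases hj : j = i
  · simp [hj]
  · have hms : MeasurableSet {ω | S j ω < S i ω ∧ j ≠ i} := by
      have : {ω | S j ω < S i ω ∧ j ≠ i} = {ω | S j ω < S i ω} := by ext ω; simp [hj]
      rw [this]; exact measurableSet_lt (hS j) (hS i)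
    exact Measurable.ite hms measurable_const measurable_const

end PCQRAux

/-- calibration of PCQR: in the PCQR setting (exchangeable pairs
`(X i, Y i)`, per-input continuous strictly increasing quantile functions `Q x` with
inverse CDFs `F x`, a.s. distinct conformity scores `S i = |1/2 - F (X i) (Y i)|`),
for `1/(n+1) ≤ δ < 1` the coverage probabilities of the PCQR intervals built from the
`⌈(1-δ)(n+1)⌉`-th and `⌊(1-δ)(n+1)⌋`-th calibration order statistics differ by at most
`1/(n+1)`. -/
theorem pcqr_well_calibrated
    {𝓧 : Type*} [MeasurableSpace 𝓧] {Ω : Type*} [MeasurableSpace Ω]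
    (P : Measure Ω) [IsProbabilityMeasure P] (n : ℕ)
    (X : Fin (n + 1) → Ω → 𝓧) (Y : Fin (n + 1) → Ω → ℝ)
    (hmX : ∀ i, Measurable (X i)) (hmY : ∀ i, Measurable (Y i))
    (hexch : ∀ σ : Equiv.Perm (Fin (n + 1)),
      Measure.map (fun ω => fun i => (X (σ i) ω, Y (σ i) ω)) P
        = Measure.map (fun ω => fun i => (X i ω, Y i ω)) P)
    (Q F : 𝓧 → ℝ → ℝ)
    (hQcont : ∀ x, ContinuousOn (Q x) (Set.Ioo 0 1))
    (hQmono : ∀ x, StrictMonoOn (Q x) (Set.Ioo 0 1))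
    (hinv : ∀ x : 𝓧, ∀ y ∈ Q x '' Set.Ioo (0 : ℝ) 1, ∀ α ∈ Set.Ioo (0 : ℝ) 1,
      (F x y = α ↔ Q x α = y))
    (hQmeas : Measurable (fun p : 𝓧 × ℝ => Q p.1 p.2))
    (hFmeas : Measurable (fun p : 𝓧 × ℝ => F p.1 p.2))
    (hrange : ∀ᵐ ω ∂P, ∀ i, Y i ω ∈ Q (X i ω) '' Set.Ioo (0 : ℝ) 1)
    (hdist : ∀ᵐ ω ∂P, ∀ i j : Fin (n + 1), i ≠ j →
      |1 / 2 - F (X i ω) (Y i ω)| ≠ |1 / 2 - F (X j ω) (Y j ω)|)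
    (δ : ℝ) (hδ1 : 1 / (n + 1 : ℝ) ≤ δ) (hδ2 : δ < 1) :
    P {ω | Y (Fin.last n) ω ∈ Set.Icc
        (Q (X (Fin.last n) ω) (1 / 2 - orderStat n
          (fun j : Fin n => |1 / 2 - F (X j.castSucc ω) (Y j.castSucc ω)|)
          ⌈(1 - δ) * (n + 1 : ℝ)⌉₊))
        (Q (X (Fin.last n) ω) (1 / 2 + orderStat n
          (fun j : Fin n => |1 / 2 - F (X j.castSucc ω) (Y j.castSucc ω)|)
          ⌈(1 - δ) * (n + 1 : ℝ)⌉₊))}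
      - P {ω | Y (Fin.last n) ω ∈ Set.Icc
        (Q (X (Fin.last n) ω) (1 / 2 - orderStat n
          (fun j : Fin n => |1 / 2 - F (X j.castSucc ω) (Y j.castSucc ω)|)
          ⌊(1 - δ) * (n + 1 : ℝ)⌋₊))
        (Q (X (Fin.last n) ω) (1 / 2 + orderStat n
          (fun j : Fin n => |1 / 2 - F (X j.castSucc ω) (Y j.castSucc ω)|)
          ⌊(1 - δ) * (n + 1 : ℝ)⌋₊))}
      ≤ 1 / (n + 1 : ℝ≥0∞) := by
  classical
  -- the two relevant indices
  by_cases hck : ⌈(1 - δ) * (n + 1 : ℝ)⌉₊ = ⌊(1 - δ) * (n + 1 : ℝ)⌋₊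
  · rw [hck]
    exact le_trans (le_of_eq (tsub_self _)) zero_le
  -- now the ceiling is the floor plus one
  have hnpos : (0:ℝ) < (n:ℝ) + 1 := by positivity
  rw [div_le_iff₀ hnpos] at hδ1
  set k := ⌊(1 - δ) * (n + 1 : ℝ)⌋₊ with hkdef
  have hck' : ⌈(1 - δ) * (n + 1 : ℝ)⌉₊ = k + 1 := by
    have h1 := Nat.ceil_le_floor_add_one ((1 - δ) * (n + 1 : ℝ))
    have h2 := Nat.floor_le_ceil ((1 - δ) * (n + 1 : ℝ))
    omega
  have hcn : ⌈(1 - δ) * (n + 1 : ℝ)⌉₊ ≤ n := by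
    refine Nat.ceil_le.2 ?_
    nlinarith
  have hk1n : k + 1 ≤ n := by omega
  rw [hck']
  -- abbreviations
  set S : Fin (n+1) → Ω → ℝ := fun i ω => |1 / 2 - F (X i ω) (Y i ω)| with hSdef
  have hS : ∀ i, Measurable (S i) := fun i =>
    (measurable_const.sub (hFmeas.comp ((hmX i).prodMk (hmY i)))).abs
  set A : Set Ω := {ω | Y (Fin.last n) ω ∈ Set.Icc
        (Q (X (Fin.last n) ω) (1 / 2 - orderStat n
          (fun j : Fin n => |1 / 2 - F (X j.castSucc ω) (Y j.castSucc ω)|) (k+1)))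
        (Q (X (Fin.last n) ω) (1 / 2 + orderStat n
          (fun j : Fin n => |1 / 2 - F (X j.castSucc ω) (Y j.castSucc ω)|) (k+1)))} with hAdef
  set B : Set Ω := {ω | Y (Fin.last n) ω ∈ Set.Icc
        (Q (X (Fin.last n) ω) (1 / 2 - orderStat n
          (fun j : Fin n => |1 / 2 - F (X j.castSucc ω) (Y j.castSucc ω)|) k))
        (Q (X (Fin.last n) ω) (1 / 2 + orderStat n
          (fun j : Fin n => |1 / 2 - F (X j.castSucc ω) (Y j.castSucc ω)|) k))} with hBdef
  show P A - P B ≤ 1 / (n + 1 : ℝ≥0∞)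
  -- rank events
  set E : Fin (n+1) → Set Ω := fun i =>
    {ω | (Finset.univ.filter (fun j => S j ω < S i ω ∧ j ≠ i)).card = k} with hEdef
  have hE : ∀ i, MeasurableSet (E i) := fun i =>
    PCQRAux.measurable_cnt S hS i (measurableSet_singleton k)
  -- the a.s. distinctness event
  set D : Set Ω := {ω | ∀ i j : Fin (n+1), i ≠ j → S i ω ≠ S j ω} with hDdef
  have hD : MeasurableSet D := by
    have : D = ⋂ (i : Fin (n+1)) (j : Fin (n+1)), {ω | i ≠ j → S i ω ≠ S j ω} := by
      ext ω; simp [hDdef, Set.mem_iInter]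
    rw [this]
    refine MeasurableSet.iInter fun i => MeasurableSet.iInter fun j => ?_
    by_cases hij : i = j
    · simp [hij]
    · have : {ω | i ≠ j → S i ω ≠ S j ω} = {ω | S i ω = S j ω}ᶜ := by
        ext ω; simp [hij]
      rw [this]
      exact (measurableSet_eq_fun (hS i) (hS j)).compl
  have hPD : P Dᶜ = 0 := by
    have := MeasureTheory.ae_iff.1 hdist
    simpa [hDdef, hSdef, Set.compl_setOf] using this
  -- the range event
  set R : Set Ω := {ω | ∀ i, Y i ω ∈ Q (X i ω) '' Set.Ioo (0 : ℝ) 1} with hRdef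
  have hPR : P Rᶜ = 0 := by
    have := MeasureTheory.ae_iff.1 hrange
    simpa [hRdef, Set.compl_setOf] using this
  -- exchangeability: all rank events have equal probability
  set φ : (Fin (n+1) → 𝓧 × ℝ) → (Fin (n+1) → ℝ) :=
    fun p j => |1 / 2 - F (p j).1 (p j).2| with hφdef
  have hφ : Measurable φ := by
    refine measurable_pi_lambda _ fun j => ?_
    exact (measurable_const.sub (hFmeas.comp (measurable_pi_apply j))).abs
  set M : Set (Fin (n+1) → ℝ) :=
    {v | (Finset.univ.filter (fun j => v j < v (Fin.last n) ∧ j ≠ Fin.last n)).card = k}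
    with hMdef
  have hM : MeasurableSet M :=
    PCQRAux.measurable_cnt (fun i (v : Fin (n+1) → ℝ) => v i)
      (fun i => measurable_pi_apply i) (Fin.last n) (measurableSet_singleton k)
  have hZ : Measurable (fun ω => fun i => (X i ω, Y i ω)) :=
    measurable_pi_lambda _ fun i => (hmX i).prodMk (hmY i)
  have hlastE : E (Fin.last n) = (fun ω => fun i => (X i ω, Y i ω)) ⁻¹' (φ ⁻¹' M) := rfl
  have hEeq : ∀ i, P (E i) = P (E (Fin.last n)) := by
    intro i
    set σ : Equiv.Perm (Fin (n+1)) := Equiv.swap i (Fin.last n) with hσdef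
    have hσlast : σ (Fin.last n) = i := Equiv.swap_apply_right _ _
    have hZσ : Measurable (fun ω => fun j => (X (σ j) ω, Y (σ j) ω)) :=
      measurable_pi_lambda _ fun j => (hmX (σ j)).prodMk (hmY (σ j))
    have h2 : E i = (fun ω => fun j => (X (σ j) ω, Y (σ j) ω)) ⁻¹' (φ ⁻¹' M) := by
      ext ω
      simp only [hEdef, Set.mem_setOf_eq, Set.mem_preimage, hMdef]
      have hcards : (Finset.univ.filter
            (fun j => S (σ j) ω < S (σ (Fin.last n)) ω ∧ j ≠ Fin.last n)).card
          = (Finset.univ.filter (fun m => S m ω < S i ω ∧ m ≠ i)).card := by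
        rw [hσlast]
        refine Finset.card_bij (fun j _ => σ j) ?_ ?_ ?_
        · intro j hj
          obtain ⟨_, hjs, hjl⟩ := Finset.mem_filter.1 hj
          refine Finset.mem_filter.2 ⟨Finset.mem_univ _, hjs, fun h => hjl ?_⟩
          have := congrArg σ.symm h
          simpa [hσdef, Equiv.symm_apply_apply, Equiv.swap_apply_left] using this
        · intro a₁ _ a₂ _ h; exact σ.injective h
        · intro m hm
          obtain ⟨_, hms, hmi⟩ := Finset.mem_filter.1 hm
          refine ⟨σ.symm m, Finset.mem_filter.2 ⟨Finset.mem_univ _, ?_, ?_⟩,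
            σ.apply_symm_apply m⟩
          · rw [σ.apply_symm_apply]; exact hms
          · intro h
            apply hmi
            rw [← σ.apply_symm_apply m, h, hσlast]
      constructor
      · intro h; rw [← h]; exact hcards
      · intro h; rw [← h]; exact hcards.symm
    calc P (E i)
        = Measure.map (fun ω => fun j => (X (σ j) ω, Y (σ j) ω)) P (φ ⁻¹' M) := by
          rw [h2, Measure.map_apply hZσ (hφ hM)]
      _ = Measure.map (fun ω => fun i => (X i ω, Y i ω)) P (φ ⁻¹' M) := by rw [hexch σ]
      _ = P (E (Fin.last n)) := by rw [Measure.map_apply hZ (hφ hM), ← hlastE]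
  -- the restricted rank events are pairwise disjoint
  have hdisj : Pairwise (Function.onFun Disjoint (fun i => E i ∩ D)) := by
    intro i j hij
    rw [Function.onFun, Set.disjoint_left]
    rintro ω ⟨hEi, hDω⟩ ⟨hEj, _⟩
    exact PCQRAux.rank_ne (fun m => S m ω) hDω hij (hEi.trans hEj.symm)
  have hEiD : ∀ i, P (E i ∩ D) = P (E i) := by
    intro i
    refine le_antisymm (measure_mono Set.inter_subset_left) ?_
    calc P (E i) ≤ P ((E i ∩ D) ∪ Dᶜ) := by
          refine measure_mono fun ω hω => ?_
          by_cases h : ω ∈ D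
          · exact Or.inl ⟨hω, h⟩
          · exact Or.inr h
      _ ≤ P (E i ∩ D) + P Dᶜ := measure_union_le _ _
      _ = P (E i ∩ D) := by rw [hPD, add_zero]
  have hmain : ((n:ℝ≥0∞) + 1) * P (E (Fin.last n)) ≤ 1 := by
    have hsum : ∑ i : Fin (n+1), P (E i ∩ D) = P (⋃ i, E i ∩ D) := by
      rw [measure_iUnion hdisj (fun i => (hE i).inter hD), tsum_fintype]
    calc ((n:ℝ≥0∞) + 1) * P (E (Fin.last n))
        = ∑ _i : Fin (n+1), P (E (Fin.last n)) := by
          rw [Finset.sum_const, Finset.card_univ, Fintype.card_fin, nsmul_eq_mul]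
          push_cast
          ring
      _ = ∑ i : Fin (n+1), P (E i) := by
          refine Finset.sum_congr rfl fun i _ => (hEeq i).symm
      _ = ∑ i : Fin (n+1), P (E i ∩ D) := by
          refine Finset.sum_congr rfl fun i _ => (hEiD i).symm
      _ = P (⋃ i, E i ∩ D) := hsum
      _ ≤ 1 := prob_le_one
  have hElast : P (E (Fin.last n)) ≤ 1 / ((n:ℝ≥0∞) + 1) := by
    rw [ENNReal.le_div_iff_mul_le (Or.inl (by simp)) (Or.inl (by
      exact ENNReal.add_ne_top.2 ⟨ENNReal.natCast_ne_top n, ENNReal.one_ne_top⟩)),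
      mul_comm]
    exact hmain
  -- pointwise inclusion: A \ B lands in the rank-k event, on the good set
  have hincl : ∀ ω, ω ∈ D → ω ∈ R → ω ∈ A \ B → ω ∈ E (Fin.last n) := by
    intro ω hDω hRω ⟨hA, hB⟩
    obtain ⟨α, hα, hQα⟩ := hRω (Fin.last n)
    have hF : F (X (Fin.last n) ω) (Y (Fin.last n) ω) = α :=
      (hinv _ _ (hRω (Fin.last n)) α hα).2 hQα
    set v : Fin n → ℝ :=
      fun j : Fin n => |1 / 2 - F (X j.castSucc ω) (Y j.castSucc ω)| with hvdef
    have hv : ∀ j : Fin n, 0 ≤ v j ∧ v j < 1/2 := by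
      intro j
      obtain ⟨β, hβ, hQβ⟩ := hRω j.castSucc
      have hFβ : F (X j.castSucc ω) (Y j.castSucc ω) = β :=
        (hinv _ _ (hRω j.castSucc) β hβ).2 hQβ
      refine ⟨abs_nonneg _, ?_⟩
      rw [hvdef]
      simp only
      rw [hFβ, abs_lt]
      obtain ⟨hβ1, hβ2⟩ := hα
      constructor <;> [linarith [hβ.2]; linarith [hβ.1]]
    have keyiff : ∀ s : ℝ, 0 ≤ s → s < 1/2 →
        ((Y (Fin.last n) ω ∈ Set.Icc (Q (X (Fin.last n) ω) (1/2 - s))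
          (Q (X (Fin.last n) ω) (1/2 + s))) ↔ S (Fin.last n) ω ≤ s) := by
      intro s hs0 hs
      have hmem1 : (1/2 - s : ℝ) ∈ Set.Ioo (0:ℝ) 1 := ⟨by linarith, by linarith⟩
      have hmem2 : (1/2 + s : ℝ) ∈ Set.Ioo (0:ℝ) 1 := ⟨by linarith, by linarith⟩
      rw [Set.mem_Icc, ← hQα,
        (hQmono _).le_iff_le hmem1 hα, (hQmono _).le_iff_le hα hmem2]
      have : S (Fin.last n) ω = |1/2 - α| := by rw [hSdef]; simp only; rw [hF]
      rw [this, abs_le]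
      constructor
      · rintro ⟨h1, h2⟩; exact ⟨by linarith, by linarith⟩
      · rintro ⟨h1, h2⟩; exact ⟨by linarith, by linarith⟩
    -- bounds on the two order statistics
    have hsA : 0 ≤ orderStat n v (k+1) ∧ orderStat n v (k+1) < 1/2 := by
      obtain ⟨j, hj⟩ := PCQRAux.orderStat_attained v (by omega) (by omega) hk1n
      rw [← hj]; exact hv j
    have hsB : 0 ≤ orderStat n v k ∧ orderStat n v k < 1/2 := by
      rcases Nat.eq_zero_or_pos k with hk0 | hkpos
      · rw [hk0, PCQRAux.orderStat_zero]; norm_num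
      · obtain ⟨j, hj⟩ := PCQRAux.orderStat_attained v (by omega) hkpos (by omega)
        rw [← hj]; exact hv j
    have hA' : S (Fin.last n) ω ≤ orderStat n v (k+1) :=
      (keyiff _ hsA.1 hsA.2).1 hA
    have hB' : ¬ S (Fin.last n) ω ≤ orderStat n v k :=
      fun h => hB ((keyiff _ hsB.1 hsB.2).2 h)
    exact PCQRAux.core hk1n (fun i => S i ω) hA' hB'
  -- assemble
  rw [tsub_le_iff_right]
  calc P A ≤ P ((A \ B) ∪ B) := measure_mono (by
        intro ω h
        by_cases hb : ω ∈ B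
        · exact Or.inr hb
        · exact Or.inl ⟨h, hb⟩)
    _ ≤ P (A \ B) + P B := measure_union_le _ _
    _ ≤ 1 / (n + 1 : ℝ≥0∞) + P B := by
        refine add_le_add ?_ le_rfl
        calc P (A \ B) ≤ P (E (Fin.last n) ∪ (Dᶜ ∪ Rᶜ)) := by
              refine measure_mono fun ω h => ?_
              by_cases hd : ω ∈ D
              · by_cases hr : ω ∈ R
                · exact Or.inl (hincl ω hd hr h)
                · exact Or.inr (Or.inr hr)
              · exact Or.inr (Or.inl hd)
          _ ≤ P (E (Fin.last n)) + P (Dᶜ ∪ Rᶜ) := measure_union_le _ _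
          _ ≤ P (E (Fin.last n)) + 0 := by
              refine add_le_add le_rfl (le_of_eq ?_)
              exact measure_union_null hPD hPR
          _ = P (E (Fin.last n)) := by rw [add_zero]
          _ ≤ 1 / (n + 1 : ℝ≥0∞) := hElast
end

section
/- Let $\mathcal{X}$ be a measurable space and let $(X_1, Y_1), \ldots, (X_{n+1}, Y_{n+1})$ be random variables taking values in $\mathcal{X} \times \mathbb{R}$ whose joint law is exchangeable. For each $x \in \mathcal{X}$, let $\hat{F}_x : \mathbb{R} \to (0,1)$ be a strictly increasing measurable estimated conditional CDF (jointly measurable in $x$ and its argument). Define $\alpha_i = \hat{F}_{X_i}(Y_i)$ and assume $\alpha_1,\ldots,\alpha_{n+1}$ are almost surely pairwise distinct; let $\alpha_{(i)}$ denote the $i$-th smallest of $\alpha_1,\ldots,\alpha_n$. Fix a target interval $[y^-, y^+]$ with $y^- \leq y^+$, and define (as random variables depending on $X_{n+1}$) $\alpha^- = \min\{ i \in \{1,\ldots,n\} : \alpha_{(i)} \geq \hat{F}_{X_{n+1}}(y^-) \}$ and $\alpha^+ = \max\{ i \in \{1,\ldots,n\} : \alpha_{(i)} \leq \hat{F}_{X_{n+1}}(y^+)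 \}$ (assume this minimum and maximum exist almost surely), and set $p^- = \frac{\alpha^+ - \alpha^-}{n+1}$ and $p^+ = \frac{\alpha^+ - \alpha^- + 2}{n+1}$. Then, when $\alpha^-$ and $\alpha^+$ are almost surely constant (deterministic), $p^- \leq P\left(y^- \leq Y_{n+1} \leq y^+\right) \leq p^+$. -/
open MeasureTheory
open scoped ENNReal

namespace OSaux

variable {n : ℕ} (v : Fin n → ℝ)

lemma card_mono {x y : ℝ} (h : x ≤ y) :
    (Finset.univ.filter (fun j : Fin n => v j ≤ x)).card
      ≤ (Finset.univ.filter (fun j : Fin n => v j ≤ y)).card := by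
  apply Finset.card_le_card
  intro j hj
  simp only [Finset.mem_filter, Finset.mem_univ, true_and] at *
  exact hj.trans h

lemma setS_nonempty {i : ℕ} (hin : i ≤ n) :
    {x : ℝ | i ≤ (Finset.univ.filter (fun j : Fin n => v j ≤ x)).card}.Nonempty := by
  rcases Nat.eq_zero_or_pos n with hn | hn
  · refine ⟨0, ?_⟩
    simp only [Set.mem_setOf_eq]
    omega
  have hne : (Finset.univ : Finset (Fin n)).Nonempty := by
    simpa [Finset.univ_nonempty_iff, ← Fin.pos_iff_nonempty]
  refine ⟨Finset.univ.sup' hne v, ?_⟩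
  have hsub : (Finset.univ : Finset (Fin n)) ⊆
      Finset.univ.filter (fun j : Fin n => v j ≤ Finset.univ.sup' hne v) := by
    intro j _
    simp only [Finset.mem_filter, Finset.mem_univ, true_and]
    exact Finset.le_sup' v (Finset.mem_univ j)
  have hcard := Finset.card_le_card hsub
  rw [Finset.card_univ, Fintype.card_fin] at hcard
  simp only [Set.mem_setOf_eq]
  omega

lemma setS_bddBelow {i : ℕ} (hi : 1 ≤ i) :
    BddBelow {x : ℝ | i ≤ (Finset.univ.filter (fun j : Fin n => v j ≤ x)).card} := by
  rcases Nat.eq_zero_or_pos n with hn | hn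
  · subst hn
    convert bddBelow_empty (α := ℝ) using 1
    · rfl
    ext x
    simp only [Set.mem_setOf_eq, Set.mem_empty_iff_false, iff_false, not_le]
    calc (Finset.univ.filter (fun j : Fin 0 => v j ≤ x)).card ≤ 0 := by simp
    _ < i := hi
  have hne : (Finset.univ : Finset (Fin n)).Nonempty := by
    simpa [Finset.univ_nonempty_iff, ← Fin.pos_iff_nonempty]
  refine ⟨Finset.univ.inf' hne v, ?_⟩
  intro x hx
  have hcard : 1 ≤ (Finset.univ.filter (fun j : Fin n => v j ≤ x)).card := hi.trans hx
  obtain ⟨j, hj⟩ := Finset.card_pos.mp hcard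
  simp only [Finset.mem_filter, Finset.mem_univ, true_and] at hj
  exact le_trans (Finset.inf'_le v (Finset.mem_univ j)) hj

/-- The sInf defining the order statistic is attained. -/
lemma orderStat_mem {i : ℕ} (hi : 1 ≤ i) (hin : i ≤ n) :
    i ≤ (Finset.univ.filter (fun j : Fin n => v j ≤ orderStat n v i)).card := by
  set S := {x : ℝ | i ≤ (Finset.univ.filter (fun j : Fin n => v j ≤ x)).card} with hS
  set L := sInf S with hL
  by_contra hc
  push_neg at hc
  have hco : orderStat n v i = L := rfl
  rw [hco] at hc
  -- gap ε
  set T := Finset.univ.filter (fun j : Fin n => L < v j) with hT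
  have hTne : T.Nonempty := by
    by_contra hTe
    rw [Finset.not_nonempty_iff_eq_empty] at hTe
    have hall : Finset.univ.filter (fun j : Fin n => v j ≤ L) = Finset.univ := by
      apply Finset.filter_true_of_mem
      intro j _
      by_contra hj
      push_neg at hj
      have hmem : j ∈ T := by simp [hT, hj]
      rw [hTe] at hmem
      exact absurd hmem (Finset.notMem_empty j)
    rw [hall, Finset.card_univ, Fintype.card_fin] at hc
    omega
  set ε := T.inf' hTne v - L with hε
  have hεpos : 0 < ε := by
    obtain ⟨j0, hj0, hj0e⟩ := Finset.exists_mem_eq_inf' hTne v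
    have : L < v j0 := by simpa [hT] using (Finset.mem_filter.mp hj0).2
    rw [hε, hj0e]
    linarith
  -- every element of S is ≥ L + ε
  have hLB : ∀ x ∈ S, L + ε ≤ x := by
    intro x hx
    have hxL : L ≤ x := csInf_le (setS_bddBelow v hi) hx
    by_contra hxlt
    push_neg at hxlt
    -- then filter at x equals filter at L
    have heq : Finset.univ.filter (fun j : Fin n => v j ≤ x)
        = Finset.univ.filter (fun j : Fin n => v j ≤ L) := by
      apply Finset.filter_congr
      intro j _
      constructor
      · intro hjx
        by_contra hjL
        push_neg at hjL
        have hjT : j ∈ T := by simp [hT, hjL]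
        have : T.inf' hTne v ≤ v j := Finset.inf'_le v hjT
        have : L + ε ≤ v j := by simpa [hε] using this
        linarith [hjx.trans_lt hxlt]
      · intro h; exact h.trans hxL
    have := hx
    rw [hS, Set.mem_setOf_eq, heq] at this
    exact absurd this (by exact not_le.mpr hc)
  have : L + ε ≤ L := by
    rw [hL]
    exact le_csInf (setS_nonempty v hin) hLB
  linarith

lemma count_le_iff {i : ℕ} (hi : 1 ≤ i) (hin : i ≤ n) (x : ℝ) :
    i ≤ (Finset.univ.filter (fun j : Fin n => v j ≤ x)).card ↔ orderStat n v i ≤ x := by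
  constructor
  · intro hx
    exact csInf_le (setS_bddBelow v hi) hx
  · intro hx
    exact le_trans (orderStat_mem v hi hin) (card_mono v hx)

lemma orderStat_mono {i j : ℕ} (hi : 1 ≤ i) (hij : i ≤ j) (hjn : j ≤ n) :
    orderStat n v i ≤ orderStat n v j := by
  apply csInf_le_csInf (setS_bddBelow v hi) (setS_nonempty v hjn)
  intro x hx
  exact le_trans hij hx


lemma rnk_last' (v : Fin (n+1) → ℝ) :
    (Finset.univ.filter (fun i : Fin (n+1) => v i ≤ v (Fin.last n))).card
      = (Finset.univ.filter (fun k : Fin n => v k.castSucc ≤ v (Fin.last n))).card + 1 := by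
  rw [Fin.univ_castSuccEmb, Finset.filter_cons]
  rw [if_pos le_rfl, Finset.card_cons]
  congr 1
  rw [Finset.filter_map, Finset.card_map]
  rfl

lemma count_bounds {n : ℕ} (w : Fin n → ℝ) (tlo thi αN : ℝ) (hth : tlo ≤ thi) (a b cnt : ℕ)
    (hceq : cnt = (Finset.univ.filter (fun k : Fin n => w k ≤ αN)).card)
    (hmin : ((Finset.Icc 1 n).filter (fun i : ℕ => tlo ≤ orderStat n w i)).min = (a : WithTop ℕ))
    (hmax : ((Finset.Icc 1 n).filter (fun i : ℕ => orderStat n w i ≤ thi)).max = (b : WithBot ℕ)) :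
    ((1 ≤ a ∧ a ≤ n) ∧ (1 ≤ b ∧ b ≤ n) ∧ a ≤ b + 2) ∧
    (tlo ≤ αN ∧ αN ≤ thi → a ≤ cnt + 1 ∧ cnt + 1 ≤ b + 1) ∧
    (a + 1 ≤ cnt + 1 → cnt + 1 ≤ b → tlo ≤ αN ∧ αN ≤ thi) := by
  subst hceq
  rw [Nat.cast_withTop] at hmin
  rw [Nat.cast_withBot] at hmax
  have hamem := Finset.mem_of_min hmin
  have hbmem := Finset.mem_of_max hmax
  simp only [Finset.mem_filter, Finset.mem_Icc] at hamem hbmem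
  obtain ⟨⟨ha1, han⟩, hta⟩ := hamem
  obtain ⟨⟨hb1, hbn⟩, htb⟩ := hbmem
  set cnt := (Finset.univ.filter (fun k : Fin n => w k ≤ αN)).card with hcnt
  have hamin : ∀ i, 1 ≤ i → i ≤ n → tlo ≤ orderStat n w i → a ≤ i := by
    intro i h1 h2 h3
    have hmem : i ∈ (Finset.Icc 1 n).filter (fun i : ℕ => tlo ≤ orderStat n w i) := by
      simp only [Finset.mem_filter, Finset.mem_Icc]
      exact ⟨⟨h1, h2⟩, h3⟩
    have := Finset.min_le hmem
    rw [hmin] at this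
    exact WithTop.coe_le_coe.mp this
  have hbmax : ∀ i, 1 ≤ i → i ≤ n → orderStat n w i ≤ thi → i ≤ b := by
    intro i h1 h2 h3
    have hmem : i ∈ (Finset.Icc 1 n).filter (fun i : ℕ => orderStat n w i ≤ thi) := by
      simp only [Finset.mem_filter, Finset.mem_Icc]
      exact ⟨⟨h1, h2⟩, h3⟩
    have := Finset.le_max hmem
    rw [hmax] at this
    exact WithBot.coe_le_coe.mp this
  have hlt : ∀ i, 1 ≤ i → i ≤ n → i < a → orderStat n w i < tlo := by
    intro i h1 h2 h3
    by_contra h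
    push_neg at h
    exact absurd (hamin i h1 h2 h) (by omega)
  have hgt : ∀ i, 1 ≤ i → i ≤ n → b < i → thi < orderStat n w i := by
    intro i h1 h2 h3
    by_contra h
    push_neg at h
    exact absurd (hbmax i h1 h2 h) (by omega)
  have hab2 : a ≤ b + 2 := by
    by_contra hc
    push_neg at hc
    have h1 : orderStat n w (b+1) ≤ orderStat n w (a-1) :=
      orderStat_mono w (by omega) (by omega) (by omega)
    have h2 := hlt (a-1) (by omega) (by omega) (by omega)
    have h3 := hgt (b+1) (by omega) (by omega) (by omega)
    linarith
  refine ⟨⟨⟨ha1, han⟩, ⟨hb1, hbn⟩, hab2⟩, ?_, ?_⟩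
  · rintro ⟨hl, hu⟩
    constructor
    · by_cases hA : a ≤ 1
      · omega
      · push_neg at hA
        have h2 := hlt (a-1) (by omega) (by omega) (by omega)
        have : a - 1 ≤ cnt := (count_le_iff w (by omega) (by omega) αN).mpr (le_of_lt (lt_of_lt_of_le h2 hl))
        omega
    · by_cases hB : n ≤ b
      · have hcn : cnt ≤ n := by
          calc cnt ≤ (Finset.univ : Finset (Fin n)).card := Finset.card_filter_le _ _
          _ = n := by simp
        omega
      · push_neg at hB
        have h3 := hgt (b+1) (by omega) (by omega) (by omega)
        have hno : ¬ (b+1 ≤ cnt) := by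
          intro hcon
          have := (count_le_iff w (by omega) (by omega) αN).mp hcon
          linarith
        omega
  · intro h1 h2
    constructor
    · have : orderStat n w a ≤ αN := (count_le_iff w ha1 han αN).mp (by omega)
      linarith
    · have hno : ¬ (b ≤ cnt) := by omega
      have hlt' : ¬ (orderStat n w b ≤ αN) := fun hcon => hno ((count_le_iff w hb1 hbn αN).mpr hcon)
      push_neg at hlt'
      linarith


variable {n : ℕ}

/-- rank count of coordinate `j` -/
noncomputable def rnk (j : Fin (n+1)) (v : Fin (n+1) → ℝ) : ℕ :=
  (Finset.univ.filter (fun i : Fin (n+1) => v i ≤ v j)).card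

lemma measurable_rnk (j : Fin (n+1)) : Measurable (fun v : Fin (n+1) → ℝ => rnk j v) := by
  have : (fun v : Fin (n+1) → ℝ => rnk j v)
      = fun v => ∑ i : Fin (n+1), if v i ≤ v j then 1 else 0 := by
    funext v
    unfold rnk
    rw [Finset.card_filter]
  rw [this]
  exact Finset.measurable_sum _ (fun i _ =>
    Measurable.ite (measurableSet_le (measurable_pi_apply i) (measurable_pi_apply j))
      measurable_const measurable_const)

lemma rnk_comp (σ : Equiv.Perm (Fin (n+1))) (j : Fin (n+1)) (v : Fin (n+1) → ℝ) :
    rnk j (v ∘ σ) = rnk (σ j) v := by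
  unfold rnk
  apply Finset.card_bij (fun i _ => σ i)
  · intro i hi
    simp only [Finset.mem_filter, Finset.mem_univ, true_and, Function.comp_apply] at *
    exact hi
  · intro i _ i' _ h
    exact σ.injective h
  · intro i hi
    refine ⟨σ.symm i, ?_, by simp⟩
    simp only [Finset.mem_filter, Finset.mem_univ, true_and, Function.comp_apply,
      Equiv.apply_symm_apply] at *
    exact hi

/-- pairwise distinct set -/
def Dset (n : ℕ) : Set (Fin (n+1) → ℝ) :=
  {v | ∀ i j : Fin (n+1), i ≠ j → v i ≠ v j}

lemma measurable_Dset : MeasurableSet (Dset n) := by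
  have : Dset n = ⋂ (i : Fin (n+1)) (j : Fin (n+1)) (_ : i ≠ j),
      {v : Fin (n+1) → ℝ | v i ≠ v j} := by
    ext v; simp [Dset]
  rw [this]
  refine MeasurableSet.iInter fun i => MeasurableSet.iInter fun j => MeasurableSet.iInter fun _ => ?_
  exact (measurableSet_eq_fun (measurable_pi_apply i) (measurable_pi_apply j)).compl

lemma Dset_comp (σ : Equiv.Perm (Fin (n+1))) (v : Fin (n+1) → ℝ) :
    (v ∘ σ) ∈ Dset n ↔ v ∈ Dset n := by
  constructor
  · intro h i j hij
    have := h (σ.symm i) (σ.symm j) (fun he => hij (by simpa using congrArg σ he))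
    simpa using this
  · intro h i j hij
    exact h (σ i) (σ j) (fun he => hij (σ.injective he))

lemma rnk_mem_Icc (v : Fin (n+1) → ℝ) (j : Fin (n+1)) : rnk j v ∈ Finset.Icc 1 (n+1) := by
  simp only [Finset.mem_Icc]
  constructor
  · have : j ∈ Finset.univ.filter (fun i : Fin (n+1) => v i ≤ v j) := by simp
    exact Finset.card_pos.mpr ⟨j, this⟩
  · calc (Finset.univ.filter (fun i : Fin (n+1) => v i ≤ v j)).card
        ≤ (Finset.univ : Finset (Fin (n+1))).card := Finset.card_filter_le _ _
    _ = n + 1 := by simp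

lemma rnk_injective {v : Fin (n+1) → ℝ} (hv : v ∈ Dset n) :
    Function.Injective (fun j => rnk j v) := by
  have key : ∀ j1 j2 : Fin (n+1), j1 ≠ j2 → v j1 < v j2 → rnk j1 v < rnk j2 v := by
    intro j1 j2 _ hlt
    apply Finset.card_lt_card
    rw [Finset.ssubset_iff_of_subset]
    · refine ⟨j2, by simp, ?_⟩
      simp only [Finset.mem_filter, Finset.mem_univ, true_and, not_le]
      exact hlt
    · intro i hi
      simp only [Finset.mem_filter, Finset.mem_univ, true_and] at *
      exact hi.trans hlt.le
  intro j1 j2 h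
  by_contra hne
  rcases lt_trichotomy (v j1) (v j2) with hlt | heq | hgt
  · exact absurd h (Nat.ne_of_lt (key j1 j2 hne hlt))
  · exact hv j1 j2 hne heq
  · exact absurd h.symm (Nat.ne_of_lt (key j2 j1 (Ne.symm hne) hgt))

lemma rnk_surj {v : Fin (n+1) → ℝ} (hv : v ∈ Dset n) {k : ℕ}
    (hk : k ∈ Finset.Icc 1 (n+1)) : ∃ j, rnk j v = k := by
  have himg : Finset.univ.image (fun j => rnk j v) = Finset.Icc 1 (n+1) := by
    apply Finset.eq_of_subset_of_card_le
    · intro x hx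
      simp only [Finset.mem_image] at hx
      obtain ⟨j, _, rfl⟩ := hx
      exact rnk_mem_Icc v j
    · rw [Nat.card_Icc, Finset.card_image_of_injective _ (rnk_injective hv)]
      simp
  have : k ∈ Finset.univ.image (fun j => rnk j v) := himg ▸ hk
  simpa using this

variable (μ : Measure (Fin (n+1) → ℝ)) [IsProbabilityMeasure μ]
  (hinv : ∀ σ : Equiv.Perm (Fin (n+1)), Measure.map (fun v => v ∘ σ) μ = μ)
  (hD : μ (Dset n) = 1)

include hinv hD in
lemma uniform_rank {k : ℕ} (hk : k ∈ Finset.Icc 1 (n+1)) :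
    μ {v | rnk (Fin.last n) v = k} = ((n : ℝ≥0∞) + 1)⁻¹ := by
  classical
  -- measurable permute map
  have hmp : ∀ σ : Equiv.Perm (Fin (n+1)), Measurable (fun v : Fin (n+1) → ℝ => v ∘ σ) :=
    fun σ => measurable_pi_lambda _ (fun i => measurable_pi_apply (σ i))
  set E : Fin (n+1) → Set (Fin (n+1) → ℝ) :=
    fun j => Dset n ∩ {v | rnk j v = k} with hE
  have hEm : ∀ j, MeasurableSet (E j) := fun j =>
    measurable_Dset.inter (measurable_rnk j (MeasurableSet.singleton k))
  -- equal measures via swap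
  have heq : ∀ j, μ (E j) = μ (E (Fin.last n)) := by
    intro j
    set σ := Equiv.swap j (Fin.last n) with hσ
    have hpre : (fun v : Fin (n+1) → ℝ => v ∘ σ) ⁻¹' (E (Fin.last n)) = E j := by
      ext v
      simp only [Set.mem_preimage, hE, Set.mem_inter_iff, Set.mem_setOf_eq]
      rw [Dset_comp σ v, rnk_comp σ (Fin.last n) v]
      have : σ (Fin.last n) = j := by simp [hσ, Equiv.swap_apply_right]
      rw [this]
    calc μ (E j) = μ ((fun v : Fin (n+1) → ℝ => v ∘ σ) ⁻¹' (E (Fin.last n))) := by rw [hpre]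
    _ = (Measure.map (fun v : Fin (n+1) → ℝ => v ∘ σ) μ) (E (Fin.last n)) := by
        rw [Measure.map_apply (hmp σ) (hEm (Fin.last n))]
    _ = μ (E (Fin.last n)) := by rw [hinv σ]
  -- disjoint cover of Dset
  have hdisj : Pairwise (Function.onFun Disjoint E) := by
    intro j1 j2 hne
    simp only [Function.onFun, Set.disjoint_left]
    intro v hv1 hv2
    have h1 := hv1.2
    have h2 := hv2.2
    simp only [Set.mem_setOf_eq] at h1 h2
    exact hne (rnk_injective hv1.1 (h1.trans h2.symm))
  have hcover : Dset n = ⋃ j, E j := by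
    ext v
    simp only [Set.mem_iUnion, hE, Set.mem_inter_iff, Set.mem_setOf_eq]
    constructor
    · intro hv
      obtain ⟨j, hj⟩ := rnk_surj hv hk
      exact ⟨j, hv, hj⟩
    · rintro ⟨j, hj, _⟩
      exact hj
  have hsum : ∑ j : Fin (n+1), μ (E j) = 1 := by
    rw [← tsum_fintype (L := SummationFilter.unconditional _), ← measure_iUnion hdisj hEm, ← hcover, hD]
  rw [Finset.sum_congr rfl (fun j _ => heq j)] at hsum
  simp only [Finset.sum_const, Finset.card_univ, Fintype.card_fin, nsmul_eq_mul] at hsum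
  -- conclude for E (last); then remove Dset
  have hElast : μ (E (Fin.last n)) = ((n : ℝ≥0∞) + 1)⁻¹ := by
    have hne : ((n : ℝ≥0∞) + 1) ≠ 0 := by simp [add_eq_zero]
    have hnt : ((n : ℝ≥0∞) + 1) ≠ ⊤ := by
      simp [ENNReal.add_ne_top]
    push_cast at hsum
    have : ((n : ℝ≥0∞) + 1)⁻¹ * (((n : ℝ≥0∞) + 1) * μ (E (Fin.last n)))
        = ((n : ℝ≥0∞) + 1)⁻¹ * 1 := by
      rw [hsum]
    rw [← mul_assoc, ENNReal.inv_mul_cancel hne hnt, one_mul, mul_one] at this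
    exact this
  have hsub1 : μ {v | rnk (Fin.last n) v = k} ≤ μ (E (Fin.last n)) + μ (Dset n)ᶜ := by
    calc μ {v | rnk (Fin.last n) v = k}
        ≤ μ (E (Fin.last n) ∪ (Dset n)ᶜ) := by
          apply measure_mono
          intro v hv
          by_cases hvD : v ∈ Dset n
          · exact Or.inl ⟨hvD, hv⟩
          · exact Or.inr hvD
    _ ≤ μ (E (Fin.last n)) + μ (Dset n)ᶜ := measure_union_le _ _
  have hDc : μ (Dset n)ᶜ = 0 := by
    rw [measure_compl measurable_Dset (measure_ne_top μ _), hD, measure_univ]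
    simp
  have hsub2 : μ (E (Fin.last n)) ≤ μ {v | rnk (Fin.last n) v = k} :=
    measure_mono (fun v hv => hv.2)
  rw [hDc, add_zero] at hsub1
  exact le_antisymm (hElast ▸ hsub1) (hElast ▸ hsub2)

end OSaux

/-- Theorem 2 of the paper, validity of PCQR⁻¹: given exchangeable pairs
`(X i, Y i)` in `𝓧 × ℝ`, per-input strictly increasing estimated CDFs
`F x : ℝ → (0,1)`, a.s. pairwise distinct calibration cumulative probabilities
`α i = F (X i) (Y i)` with order statistics `α_(i)`, and a target interval
`[y⁻, y⁺]`, define `α⁻ = min {i ∈ {1,…,n} : α_(i) ≥ F (X last) y⁻}` and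
`α⁺ = max {i ∈ {1,…,n} : α_(i) ≤ F (X last) y⁺}`. If `α⁻` and `α⁺` exist and are
almost surely equal to the constants `a` and `b` respectively, then
`(b - a)/(n+1) ≤ P(y⁻ ≤ Y last ≤ y⁺) ≤ (b - a + 2)/(n+1)`. -/
theorem pcqr_inverse_marginal_bounds
    {𝓧 : Type*} [MeasurableSpace 𝓧] {Ω : Type*} [MeasurableSpace Ω]
    (P : Measure Ω) [IsProbabilityMeasure P] (n : ℕ)
    (X : Fin (n + 1) → Ω → 𝓧) (Y : Fin (n + 1) → Ω → ℝ)
    (hmX : ∀ i, Measurable (X i)) (hmY : ∀ i, Measurable (Y i))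
    (hexch : ∀ σ : Equiv.Perm (Fin (n + 1)),
      Measure.map (fun ω => fun i => (X (σ i) ω, Y (σ i) ω)) P
        = Measure.map (fun ω => fun i => (X i ω, Y i ω)) P)
    (F : 𝓧 → ℝ → ℝ)
    (hFmono : ∀ x, StrictMono (F x))
    (hFrange : ∀ x y, F x y ∈ Set.Ioo (0 : ℝ) 1)
    (hFmeas : Measurable (fun p : 𝓧 × ℝ => F p.1 p.2))
    (hdist : ∀ᵐ ω ∂P, ∀ i j : Fin (n + 1), i ≠ j →
      F (X i ω) (Y i ω) ≠ F (X j ω) (Y j ω))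
    (ym yp : ℝ) (hy : ym ≤ yp)
    (a b : ℕ)
    (hconst : ∀ᵐ ω ∂P,
      ((Finset.Icc 1 n).filter (fun i : ℕ =>
          F (X (Fin.last n) ω) ym ≤
            orderStat n (fun k : Fin n => F (X k.castSucc ω) (Y k.castSucc ω)) i)).min
          = (a : WithTop ℕ) ∧
      ((Finset.Icc 1 n).filter (fun i : ℕ =>
          orderStat n (fun k : Fin n => F (X k.castSucc ω) (Y k.castSucc ω)) i ≤
            F (X (Fin.last n) ω) yp)).max
          = (b : WithBot ℕ)) :
    ((b : ℝ) - (a : ℝ)) / (n + 1 : ℝ)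
        ≤ (P {ω | ym ≤ Y (Fin.last n) ω ∧ Y (Fin.last n) ω ≤ yp}).toReal ∧
      (P {ω | ym ≤ Y (Fin.last n) ω ∧ Y (Fin.last n) ω ≤ yp}).toReal
        ≤ ((b : ℝ) - (a : ℝ) + 2) / (n + 1 : ℝ) := by
  set A : Ω → (Fin (n+1) → ℝ) := fun ω i => F (X i ω) (Y i ω) with hA
  have hmA : Measurable A :=
    measurable_pi_lambda _ (fun i => hFmeas.comp ((hmX i).prodMk (hmY i)))
  set μ : Measure (Fin (n+1) → ℝ) := Measure.map A P with hμ
  haveI hPμ : IsProbabilityMeasure μ := Measure.isProbabilityMeasure_map hmA.aemeasurable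
  have hmG : Measurable (fun u : Fin (n+1) → 𝓧 × ℝ => fun i => F (u i).1 (u i).2) :=
    measurable_pi_lambda _ (fun i => hFmeas.comp (measurable_pi_apply i))
  have hmpair : Measurable (fun ω => fun i : Fin (n+1) => (X i ω, Y i ω)) :=
    measurable_pi_lambda _ (fun i => (hmX i).prodMk (hmY i))
  have hinv : ∀ σ : Equiv.Perm (Fin (n+1)),
      Measure.map (fun v : Fin (n+1) → ℝ => v ∘ σ) μ = μ := by
    intro σ
    have hmσ : Measurable (fun v : Fin (n+1) → ℝ => v ∘ σ) :=
      measurable_pi_lambda _ (fun i => measurable_pi_apply (σ i))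
    have hmpairσ : Measurable (fun ω => fun i : Fin (n+1) => (X (σ i) ω, Y (σ i) ω)) :=
      measurable_pi_lambda _ (fun i => (hmX (σ i)).prodMk (hmY (σ i)))
    rw [hμ, Measure.map_map hmσ hmA]
    have e1 : ((fun v : Fin (n+1) → ℝ => v ∘ σ) ∘ A)
        = (fun u : Fin (n+1) → 𝓧 × ℝ => fun i => F (u i).1 (u i).2)
          ∘ (fun ω => fun i : Fin (n+1) => (X (σ i) ω, Y (σ i) ω)) := rfl
    have e2 : A = (fun u : Fin (n+1) → 𝓧 × ℝ => fun i => F (u i).1 (u i).2)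
          ∘ (fun ω => fun i : Fin (n+1) => (X i ω, Y i ω)) := rfl
    rw [e1, ← Measure.map_map hmG hmpairσ, hexch σ, Measure.map_map hmG hmpair, ← e2]
  have hD : μ (OSaux.Dset n) = 1 := by
    rw [hμ, Measure.map_apply hmA OSaux.measurable_Dset]
    refine (mem_ae_iff_prob_eq_one (hmA OSaux.measurable_Dset)).mp ?_
    exact hdist
  set T : ℕ → Set (Fin (n+1) → ℝ) := fun k => {v | OSaux.rnk (Fin.last n) v = k} with hT
  have hTm : ∀ k, MeasurableSet (T k) := fun k =>
    OSaux.measurable_rnk (Fin.last n) (MeasurableSet.singleton k)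
  have hTdisj : ∀ (s : Finset ℕ), (↑s : Set ℕ).PairwiseDisjoint T := by
    intro s k1 _ k2 _ hne
    simp only [Function.onFun, Set.disjoint_left, hT, Set.mem_setOf_eq]
    intro v hv1 hv2
    exact hne (hv1.symm.trans hv2)
  have hunif : ∀ k, 1 ≤ k → k ≤ n + 1 → μ (T k) = ((n : ℝ≥0∞) + 1)⁻¹ := by
    intro k h1 h2
    exact OSaux.uniform_rank μ hinv hD (by simp only [Finset.mem_Icc]; omega)
  -- constants are in range
  haveI : (MeasureTheory.ae P).NeBot := IsProbabilityMeasure.ae_neBot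
  obtain ⟨ω0, hmin0, hmax0⟩ := hconst.exists
  obtain ⟨⟨⟨ha1, han⟩, ⟨hb1, hbn⟩, hab2⟩, -, -⟩ :=
    OSaux.count_bounds (fun k : Fin n => F (X k.castSucc ω0) (Y k.castSucc ω0))
      (F (X (Fin.last n) ω0) ym) (F (X (Fin.last n) ω0) yp) (0 : ℝ)
      ((hFmono (X (Fin.last n) ω0)).monotone hy) a b _ rfl hmin0 hmax0
  set E : Set Ω := {ω | ym ≤ Y (Fin.last n) ω ∧ Y (Fin.last n) ω ≤ yp} with hE
  -- lower inclusion
  have hsub1 : (A ⁻¹' (⋃ k ∈ Finset.Icc (a+1) b, T k)) ≤ᵐ[P] E := by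
    filter_upwards [hconst] with ω hc
    intro hmem
    have hmem' : A ω ∈ ⋃ k ∈ Finset.Icc (a+1) b, T k := hmem
    rw [Set.mem_iUnion₂] at hmem'
    obtain ⟨k, hk, hrk'⟩ := hmem'
    have hrk : OSaux.rnk (Fin.last n) (A ω) = k := hrk'
    rw [Finset.mem_Icc] at hk
    have hr : OSaux.rnk (Fin.last n) (A ω)
        = (Finset.univ.filter (fun j : Fin n => F (X j.castSucc ω) (Y j.castSucc ω)
            ≤ F (X (Fin.last n) ω) (Y (Fin.last n) ω))).card + 1 := OSaux.rnk_last' (A ω)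
    obtain ⟨-, -, hC2⟩ :=
      OSaux.count_bounds (fun k : Fin n => F (X k.castSucc ω) (Y k.castSucc ω))
        (F (X (Fin.last n) ω) ym) (F (X (Fin.last n) ω) yp)
        (F (X (Fin.last n) ω) (Y (Fin.last n) ω))
        ((hFmono (X (Fin.last n) ω)).monotone hy) a b
        ((Finset.univ.filter (fun j : Fin n => F (X j.castSucc ω) (Y j.castSucc ω)
            ≤ F (X (Fin.last n) ω) (Y (Fin.last n) ω))).card) rfl hc.1 hc.2
    have hcc := hC2 (by omega) (by omega)
    exact ⟨(hFmono (X (Fin.last n) ω)).le_iff_le.mp hcc.1,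
      (hFmono (X (Fin.last n) ω)).le_iff_le.mp hcc.2⟩
  -- upper inclusion
  have hsub2 : E ≤ᵐ[P] (A ⁻¹' (⋃ k ∈ Finset.Icc a (b+1), T k)) := by
    filter_upwards [hconst] with ω hc
    intro hmem
    have hr : OSaux.rnk (Fin.last n) (A ω)
        = (Finset.univ.filter (fun j : Fin n => F (X j.castSucc ω) (Y j.castSucc ω)
            ≤ F (X (Fin.last n) ω) (Y (Fin.last n) ω))).card + 1 := OSaux.rnk_last' (A ω)
    obtain ⟨-, hC1, -⟩ :=
      OSaux.count_bounds (fun k : Fin n => F (X k.castSucc ω) (Y k.castSucc ω))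
        (F (X (Fin.last n) ω) ym) (F (X (Fin.last n) ω) yp)
        (F (X (Fin.last n) ω) (Y (Fin.last n) ω))
        ((hFmono (X (Fin.last n) ω)).monotone hy) a b
        ((Finset.univ.filter (fun j : Fin n => F (X j.castSucc ω) (Y j.castSucc ω)
            ≤ F (X (Fin.last n) ω) (Y (Fin.last n) ω))).card) rfl hc.1 hc.2
    have hk := hC1 ⟨(hFmono (X (Fin.last n) ω)).le_iff_le.mpr hmem.1,
      (hFmono (X (Fin.last n) ω)).le_iff_le.mpr hmem.2⟩
    show A ω ∈ ⋃ k ∈ Finset.Icc a (b+1), T k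
    rw [Set.mem_iUnion₂]
    exact ⟨OSaux.rnk (Fin.last n) (A ω), by rw [Finset.mem_Icc]; omega, rfl⟩
  -- measures of the unions
  have hsumconst : ∀ (s : Finset ℕ), (∀ k ∈ s, 1 ≤ k ∧ k ≤ n+1) →
      ∑ k ∈ s, μ (T k) = (s.card : ℝ≥0∞) * ((n:ℝ≥0∞)+1)⁻¹ := by
    intro s hs
    rw [Finset.sum_congr rfl (fun k hk => hunif k (hs k hk).1 (hs k hk).2),
      Finset.sum_const, nsmul_eq_mul]
  have hμU1 : μ (⋃ k ∈ Finset.Icc (a+1) b, T k)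
      = ((Finset.Icc (a+1) b).card : ℝ≥0∞) * ((n:ℝ≥0∞)+1)⁻¹ := by
    rw [measure_biUnion_finset (hTdisj _) (fun k _ => hTm k)]
    exact hsumconst _ (fun k hk => by rw [Finset.mem_Icc] at hk; omega)
  have hμU2 : μ (⋃ k ∈ Finset.Icc a (b+1), T k)
      ≤ ((Finset.Icc a (b+1)).card : ℝ≥0∞) * ((n:ℝ≥0∞)+1)⁻¹ := by
    refine le_trans (measure_biUnion_finset_le _ _) ?_
    exact le_of_eq (hsumconst _ (fun k hk => by rw [Finset.mem_Icc] at hk; omega))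
  have hU1m : MeasurableSet (⋃ k ∈ Finset.Icc (a+1) b, T k) :=
    (Finset.Icc (a+1) b).measurableSet_biUnion (fun k _ => hTm k)
  have hU2m : MeasurableSet (⋃ k ∈ Finset.Icc a (b+1), T k) :=
    (Finset.Icc a (b+1)).measurableSet_biUnion (fun k _ => hTm k)
  have hPE1 : ((Finset.Icc (a+1) b).card : ℝ≥0∞) * ((n:ℝ≥0∞)+1)⁻¹ ≤ P E := by
    rw [← hμU1]
    calc μ (⋃ k ∈ Finset.Icc (a+1) b, T k)
        = P (A ⁻¹' (⋃ k ∈ Finset.Icc (a+1) b, T k)) := Measure.map_apply hmA hU1m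
    _ ≤ P E := measure_mono_ae hsub1
  have hPE2 : P E ≤ ((Finset.Icc a (b+1)).card : ℝ≥0∞) * ((n:ℝ≥0∞)+1)⁻¹ := by
    refine le_trans (measure_mono_ae hsub2) ?_
    rw [← Measure.map_apply hmA hU2m]
    exact hμU2
  -- final real arithmetic
  have hcard1 : (Finset.Icc (a+1) b).card = b - a := by rw [Nat.card_Icc]; omega
  have hcard2 : (Finset.Icc a (b+1)).card = b + 2 - a := by rw [Nat.card_Icc]
  have htr : ∀ m : ℕ, (((m:ℝ≥0∞)) * ((n:ℝ≥0∞)+1)⁻¹).toReal = (m:ℝ)/((n:ℝ)+1) := by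
    intro m
    have hcast : ((n:ℝ≥0∞)+1) = ((n+1:ℕ):ℝ≥0∞) := by push_cast; ring
    rw [hcast, ENNReal.toReal_mul, ENNReal.toReal_inv, ENNReal.toReal_natCast,
      ENNReal.toReal_natCast, div_eq_mul_inv]
    push_cast
    ring_nf
  have hmul_ne_top : ∀ m : ℕ, ((m:ℝ≥0∞)) * ((n:ℝ≥0∞)+1)⁻¹ ≠ ⊤ := by
    intro m
    refine ENNReal.mul_ne_top (ENNReal.natCast_ne_top m) ?_
    refine ENNReal.inv_ne_top.mpr ?_
    simp [add_eq_zero]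
  constructor
  · -- lower bound
    by_cases hba : a ≤ b
    · have h1 := (ENNReal.toReal_le_toReal (hmul_ne_top (b - a)) (measure_ne_top P E)).mpr
        (by rw [← hcard1] at *; exact hcard1 ▸ hPE1)
      rw [htr (b - a)] at h1
      have hcast : ((b - a : ℕ) : ℝ) = (b:ℝ) - (a:ℝ) := by
        rw [Nat.cast_sub hba]
      rw [hcast] at h1
      exact h1
    · push_neg at hba
      have hle0 : ((b:ℝ) - (a:ℝ)) / ((n:ℝ)+1) ≤ 0 := by
        apply div_nonpos_of_nonpos_of_nonneg
        · have : (b:ℝ) ≤ (a:ℝ) := by exact_mod_cast hba.le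
          linarith
        · positivity
      exact hle0.trans ENNReal.toReal_nonneg
  · -- upper bound
    have h2 := (ENNReal.toReal_le_toReal (measure_ne_top P E) (hmul_ne_top (b + 2 - a))).mpr
      (hcard2 ▸ hPE2)
    rw [htr (b + 2 - a)] at h2
    have hcast : ((b + 2 - a : ℕ) : ℝ) = (b:ℝ) - (a:ℝ) + 2 := by
      rw [Nat.cast_sub (by omega : a ≤ b + 2)]
      push_cast
      ring
    rw [hcast] at h2
    exact h2
end
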